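/- Let X be a real Banach space, K ⊆ X convex, A : K → X* of type strict ql, and a : K → X continuous on line segments. If x ∈ K solves the inverted Minty inequality, i.e. ⟨A(y) − A(x), a(y)⟩ ≥ 0 for all y ∈ K, then x solves the inverted Stampacchia inequality, i.e. ⟨A(z) − A(x), a(x)⟩ ≥ 0 for all z ∈ K. -/

import Mathlib

open Filter Topology

theorem stmt_8 {X : Type*} [NormedAddCommGroup X] [NormedSpace ℝ X] [CompleteSpace X]
    (K : Set X) (hK : Convex ℝ K)
    (A : X → StrongDual ℝ X) (a : X → X)
    (hsql : ∀ x ∈ K, ∀ y ∈ K, x ≠ y → ∀ z ∈ openSegment ℝ x y, z ∈ K →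
      A z ∈ openSegment ℝ (A x) (A y))
    (ha : ∀ x ∈ K, ∀ (t : ℕ → ℝ), Tendsto t atTop (𝓝 0) → ∀ y : X,
      (∀ n, x + t n • y ∈ K) → Tendsto (fun n => a (x + t n • y)) atTop (𝓝 (a x)))
    (x : X) (hx : x ∈ K)
    (hM : ∀ y ∈ K, (A y - A x) (a y) ≥ 0) :
    ∀ z ∈ K, (A z - A x) (a x) ≥ 0 := by
  intro z hz
  by_cases hne : x = z
  · simp [hne]
  -- sequence t n = 1/(n+2)
  set t : ℕ → ℝ := fun n => 1 / (n + 2) with ht_def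
  have ht0 : ∀ n, 0 < t n := fun n => by positivity
  have ht1 : ∀ n, t n < 1 := by
    intro n
    have : (1 : ℝ) < n + 2 := by have : (0:ℝ) ≤ n := Nat.cast_nonneg n; linarith
    rw [ht_def]
    rw [div_lt_one (by positivity)]
    exact this
  have htt : Tendsto t atTop (𝓝 0) := by
    have := tendsto_one_div_add_atTop_nhds_zero_nat (𝕜 := ℝ)
    have h2 : Tendsto (fun n : ℕ => (n : ℝ) + 2) atTop atTop :=
      tendsto_atTop_add_const_right _ 2 tendsto_natCast_atTop_atTop
    simpa [ht_def] using h2.inv_tendsto_atTop.congr (fun n => by simp [one_div])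
  -- points y n
  have hconv : ∀ n, x + t n • (z - x) ∈ K := by
    intro n
    have := hK hx hz (by linarith [ht1 n] : (0:ℝ) ≤ 1 - t n) (le_of_lt (ht0 n)) (by ring)
    convert this using 1
    simp [smul_sub, sub_smul]
    abel
  have hopen : ∀ n, x + t n • (z - x) ∈ openSegment ℝ x z := by
    intro n
    refine ⟨1 - t n, t n, by linarith [ht1 n], ht0 n, by ring, ?_⟩
    simp [smul_sub, sub_smul]
    abel
  -- the functional
  set f := A z - A x with hf
  have hnn : ∀ n, f (a (x + t n • (z - x))) ≥ 0 := by
    intro n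
    obtain ⟨α, β, hα, hβ, hαβ, hcomb⟩ :=
      hsql x hx z hz hne _ (hopen n) (hconv n)
    have hA : A (x + t n • (z - x)) - A x = β • f := by
      rw [← hcomb, hf]
      have : α = 1 - β := by linarith
      rw [this]
      module
    have := hM _ (hconv n)
    rw [hA] at this
    have : β * f (a (x + t n • (z - x))) ≥ 0 := by simpa using this
    nlinarith
  have hconta := ha x hx t htt (z - x) hconv
  have hlim : Tendsto (fun n => f (a (x + t n • (z - x)))) atTop (𝓝 (f (a x))) :=
    (f.continuous.tendsto _).comp hconta
  exact ge_of_tendsto hlim (Eventually.of_forall hnn)
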